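/- Let Z be an n-dimensional naturally graded p-filiform complex Zinbiel algebra of first type, with natural gradation Z = Z_1 ⊕ ⋯ ⊕ Z_{n−p}, Z_1 = ⟨e_1, f_1, …, f_{s_1}⟩, where s_i = dim Z_i − 1. Then: (i) e_q ∘ f_j = 0 for all 1 ≤ q ≤ n−p and 1 ≤ j ≤ s_1; (ii) f_j ∘ e_q ∈ span{f_{s_1+1}, …, f_p} for all 1 ≤ q ≤ n−p−2 and 1 ≤ j ≤ s_1; (iii) f_j ∘ e_{n−p−1} ∈ span{e_{n−p}, f_{s_1+1}, …, f_p} for all 1 ≤ j ≤ s_1. -/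
import Mathlib


open Module Submodule

/-- The Zinbiel identity for a bilinear operation `mul` on a complex vector space:
`(x∘y)∘z = x∘(y∘z) + x∘(z∘y)`. -/
def IsZinbiel {Z : Type*} [AddCommGroup Z] [Module ℂ Z] (mul : Z →ₗ[ℂ] Z →ₗ[ℂ] Z) : Prop :=
  ∀ x y z : Z, mul (mul x y) z = mul x (mul y z) + mul x (mul z y)
/-- The square `Z ∘ Z` of the algebra. -/
def algSq {Z : Type*} [AddCommGroup Z] [Module ℂ Z] (mul : Z →ₗ[ℂ] Z →ₗ[ℂ] Z) :
    Submodule ℂ Z :=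
  Submodule.span ℂ {z | ∃ x y, z = mul x y}
/-- `C(Z) = (n-p, 1, …, 1)` (`p`-filiformity) expressed via the left multiplication
operators: for every `x ∉ Z²` the nilpotent operator `L_x` satisfies `L_x^(n-p) = 0`
and has rank at most `n-p-1`; this says exactly that the Jordan type of every `L_x`
is lexicographically at most `(n-p, 1, …, 1)`. -/
def CharSeqMax {Z : Type*} [AddCommGroup Z] [Module ℂ Z]
    (mul : Z →ₗ[ℂ] Z →ₗ[ℂ] Z) (n p : ℕ) : Prop :=
  ∀ x : Z, x ∉ algSq mul →
    ((mul x : Module.End ℂ Z) ^ (n - p) = 0) ∧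
      Module.finrank ℂ (LinearMap.range (mul x)) ≤ n - p - 1
/-- The adapted family `e_1, …, e_m, f_1, …, f_p` indexed by `Fin m ⊕ Fin p`. -/
def adaptedFam {Z : Type*} (m p : ℕ) (e f : ℕ → Z) : Fin m ⊕ Fin p → Z :=
  Sum.elim (fun i => e ((i : ℕ) + 1)) (fun j => f ((j : ℕ) + 1))
/-- `psum s k = s 1 + s 2 + ⋯ + s k`. -/
def psum (s : ℕ → ℕ) (k : ℕ) : ℕ := ∑ j ∈ Finset.Icc 1 k, s j

/-- Step I of Proposition (`s<s`): (i) `e_q ∘ f_j = 0` for `1 ≤ q ≤ n-p`, `1 ≤ j ≤ s_1`;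
(ii) `f_j ∘ e_q ∈ ⟨f_{s_1+1}, …, f_p⟩` for `1 ≤ q ≤ n-p-2`;
(iii) `f_j ∘ e_{n-p-1} ∈ ⟨e_{n-p}, f_{s_1+1}, …, f_p⟩`. -/
theorem graded_p_filiform_step_products
    {Z : Type*} [AddCommGroup Z] [Module ℂ Z]
    (mul : Z →ₗ[ℂ] Z →ₗ[ℂ] Z) (hzin : IsZinbiel mul)
    (n p : ℕ) (hpn : p < n)
    (e f : ℕ → Z)
    -- `{e_1, …, e_{n-p}, f_1, …, f_p}` is a basis of the `n`-dimensional algebra `Z`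
    (hli : LinearIndependent ℂ (adaptedFam (n - p) p e f))
    (hsp : Submodule.span ℂ (Set.range (adaptedFam (n - p) p e f)) = ⊤)
    -- the basis is adapted of first type: `e_1 ∘ e_i = e_{i+1}`, `e_1 ∘ e_{n-p} = 0`,
    -- `e_1 ∘ f_j = 0`
    (hee : ∀ i, 1 ≤ i → i ≤ n - p - 1 → mul (e 1) (e i) = e (i + 1))
    (hetop : mul (e 1) (e (n - p)) = 0)
    (hef : ∀ j, 1 ≤ j → j ≤ p → mul (e 1) (f j) = 0)
    -- the natural gradation `Z = Z_1 ⊕ ⋯ ⊕ Z_{n-p}` : `W i` is the `i`-th component,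
    -- the gradation is multiplicative and generated in degree one
    -- (`Z_{i+1} = Z_1 ∘ Z_i`, coming from `Z_i = Z^i/Z^{i+1}`), and `e_i ∈ Z_i`
    (W : ℕ → Submodule ℂ Z)
    (hW0 : W 0 = ⊥)
    (hWhigh : ∀ i, n - p < i → W i = ⊥)
    (hWint : DirectSum.IsInternal W)
    (hWmul : ∀ i j, ∀ x ∈ W i, ∀ y ∈ W j, mul x y ∈ W (i + j))
    (hWgen : ∀ i, 1 ≤ i → W (i + 1) = Submodule.span ℂ {z | ∃ x ∈ W 1, ∃ y ∈ W i, z = mul x y})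
    (heW : ∀ i, 1 ≤ i → i ≤ n - p → e i ∈ W i)
    -- `Z` is `p`-filiform with characteristic vector `e_1 ∉ Z²`
    (hfil : CharSeqMax mul n p)
    (he1sq : e 1 ∉ algSq mul)
    -- `s_i = dim Z_i - 1` and
    -- `Z_i = ⟨e_i, f_{s_1+⋯+s_{i-1}+1}, …, f_{s_1+⋯+s_i}⟩` for `1 ≤ i ≤ n-p`
    (s : ℕ → ℕ) (hs0 : s 0 = 0) (hshigh : ∀ i, n - p < i → s i = 0)
    (hsum : psum s (n - p) = p)
    (hWspan : ∀ i, 1 ≤ i → i ≤ n - p →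
      W i = Submodule.span ℂ (insert (e i) (f '' Set.Icc (psum s (i - 1) + 1) (psum s i))))
    :
    (∀ q j, 1 ≤ q → q ≤ n - p → 1 ≤ j → j ≤ s 1 → mul (e q) (f j) = 0) ∧
    (∀ q j, 1 ≤ q → q ≤ n - p - 2 → 1 ≤ j → j ≤ s 1 →
      mul (f j) (e q) ∈ Submodule.span ℂ (f '' Set.Icc (s 1 + 1) p)) ∧
    (∀ j, 1 ≤ j → j ≤ s 1 →
      mul (f j) (e (n - p - 1)) ∈
        Submodule.span ℂ (insert (e (n - p)) (f '' Set.Icc (s 1 + 1) p))) := by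
  set m := n - p with hmdef
  have hm1 : 1 ≤ m := by omega
  -- psum facts
  have hpsum_mono : ∀ a b : ℕ, a ≤ b → psum s a ≤ psum s b := by
    intro a b hab
    exact Finset.sum_le_sum_of_subset (Finset.Icc_subset_Icc_right hab)
  have hpsum0 : psum s 0 = 0 := by simp [psum]
  have hpsum1 : psum s 1 = s 1 := by simp [psum]
  have hs1p : s 1 ≤ p := by
    rw [← hpsum1, ← hsum]; exact hpsum_mono 1 m hm1
  -- f j ∈ W 1 for 1 ≤ j ≤ s 1
  have hfW1 : ∀ j, 1 ≤ j → j ≤ s 1 → f j ∈ W 1 := by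
    intro j hj1 hjs
    rw [hWspan 1 le_rfl hm1]
    refine Submodule.subset_span ?_
    refine Set.mem_insert_iff.mpr (Or.inr ⟨j, ?_, rfl⟩)
    simp only [Set.mem_Icc, hpsum0, hpsum1]
    omega
  -- part (i) : holds for all j ≤ p in fact
  have part1' : ∀ q j, 1 ≤ q → q ≤ m → 1 ≤ j → j ≤ p → mul (e q) (f j) = 0 := by
    intro q j hq1 hqm hj1 hjp
    by_cases hq : q = 1
    · subst hq; exact hef j hj1 hjp
    · have heq : mul (e 1) (e (q - 1)) = e q := by
        have h := hee (q - 1) (by omega) (by omega)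
        rwa [Nat.sub_add_cancel hq1] at h
      have h1 := hzin (e 1) (e (q - 1)) (f j)
      have h2 := hzin (e 1) (f j) (e (q - 1))
      rw [hef j hj1 hjp] at h2
      simp only [map_zero, LinearMap.zero_apply] at h2
      rw [heq] at h1
      rw [h1, add_comm]
      exact h2.symm
  have part1 : ∀ q j, 1 ≤ q → q ≤ m → 1 ≤ j → j ≤ s 1 → mul (e q) (f j) = 0 :=
    fun q j hq1 hqm hj1 hjs => part1' q j hq1 hqm hj1 (hjs.trans hs1p)
  -- key : e_1 ∘ (f_j ∘ e_q) = 0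
  have key : ∀ q j, 1 ≤ q → q ≤ m → 1 ≤ j → j ≤ p →
      mul (e 1) (mul (f j) (e q)) = 0 := by
    intro q j hq1 hqm hj1 hjp
    have h2 := hzin (e 1) (f j) (e q)
    rw [hef j hj1 hjp, part1' q j hq1 hqm hj1 hjp] at h2
    simp only [map_zero, LinearMap.zero_apply, add_zero] at h2
    exact h2.symm
  refine ⟨part1, ?_, ?_⟩
  · -- part (ii)
    intro q j hq1 hq2 hj1 hjs
    have hjp : j ≤ p := hjs.trans hs1p
    have hgW : mul (f j) (e q) ∈ W (q + 1) := by
      have h := hWmul 1 q (f j) (hfW1 j hj1 hjs) (e q) (heW q hq1 (by omega))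
      rwa [Nat.add_comm] at h
    rw [hWspan (q + 1) (by omega) (by omega)] at hgW
    obtain ⟨α, u, hu, hgu⟩ := Submodule.mem_span_insert.mp hgW
    have hue : mul (e 1) u = 0 := by
      have hsub : Submodule.span ℂ
          (f '' Set.Icc (psum s (q + 1 - 1) + 1) (psum s (q + 1))) ≤
          LinearMap.ker (mul (e 1)) := by
        rw [Submodule.span_le]
        rintro _ ⟨k, ⟨hk1, hk2⟩, rfl⟩
        have hkp : k ≤ p := by
          rw [← hsum]; exact hk2.trans (hpsum_mono (q + 1) m (by omega))
        exact LinearMap.mem_ker.mpr (hef k (by omega) hkp)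
      exact LinearMap.mem_ker.mp (hsub hu)
    have hkey := key q j hq1 (by omega) hj1 hjp
    rw [hgu, map_add, map_smul, hue, add_zero,
      hee (q + 1) (by omega) (by omega)] at hkey
    have hne : e (q + 1 + 1) ≠ 0 := by
      have h := hli.ne_zero (Sum.inl (⟨q + 1, by omega⟩ : Fin m))
      simpa [adaptedFam] using h
    have hα : α = 0 := by
      rcases smul_eq_zero.mp hkey with h | h
      · exact h
      · exact absurd h hne
    rw [hgu, hα, zero_smul, zero_add]
    refine Submodule.span_mono (Set.image_mono (Set.Icc_subset_Icc ?_ ?_)) hu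
    · have : s 1 ≤ psum s (q + 1 - 1) := by
        rw [← hpsum1]; exact hpsum_mono 1 (q + 1 - 1) (by omega)
      omega
    · rw [← hsum]; exact hpsum_mono (q + 1) m (by omega)
  · -- part (iii)
    intro j hj1 hjs
    by_cases hm2 : 2 ≤ m
    · have hgW : mul (f j) (e (m - 1)) ∈ W m := by
        have h := hWmul 1 (m - 1) (f j) (hfW1 j hj1 hjs) (e (m - 1))
          (heW (m - 1) (by omega) (by omega))
        have heq : 1 + (m - 1) = m := by omega
        rwa [heq] at h
      rw [hWspan m hm1 le_rfl] at hgW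
      refine Submodule.span_le.mpr ?_ hgW
      intro z hz
      rcases Set.mem_insert_iff.mp hz with h | ⟨k, ⟨hk1, hk2⟩, rfl⟩
      · exact Submodule.subset_span (Set.mem_insert_iff.mpr (Or.inl h))
      · refine Submodule.subset_span (Set.mem_insert_iff.mpr (Or.inr ⟨k, ?_, rfl⟩))
        have hlo : s 1 ≤ psum s (m - 1) := by
          rw [← hpsum1]; exact hpsum_mono 1 (m - 1) (by omega)
        have hhi : psum s m ≤ p := le_of_eq hsum
        exact Set.mem_Icc.mpr ⟨by omega, by omega⟩
    · -- degenerate case m = 1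
      have hm1' : m = 1 := by omega
      have hW1top : W 1 = ⊤ := by
        refine le_antisymm le_top ?_
        rw [← hWint.submodule_iSup_eq_top]
        refine iSup_le fun i => ?_
        by_cases h1 : i = 1
        · subst h1; exact le_rfl
        · by_cases h0 : i = 0
          · subst h0; rw [hW0]; exact bot_le
          · rw [hWhigh i (by omega)]; exact bot_le
      have h2 : mul (f j) (e (m - 1)) ∈ W 2 :=
        hWmul 1 1 (f j) (hfW1 j hj1 hjs) (e (m - 1)) (hW1top ▸ Submodule.mem_top)
      rw [hWhigh 2 (by omega)] at h2
      have h0 : mul (f j) (e (m - 1)) = 0 := by simpa using h2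
      rw [h0]
      exact Submodule.zero_mem _
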